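/- Let q = (√5 − 1)/2 and let f : ℝ → ℝ be a solution of Schilling's problem for q. Then f(2q) = 0, f(−2q) = 0, f(2 − q) = 0, f(−2 + q) = 0, f(1 − q) = 0 and f(−1 + q) = 0. -/
import Mathlib

theorem schilling_golden_more_values (q : ℝ) (hq : q = (Real.sqrt 5 - 1) / 2)
    (f : ℝ → ℝ)
    (hfe : ∀ x : ℝ, f (q * x) = (1 / (4 * q)) * (f (x - 1) + f (x + 1) + 2 * f x))
    (hfv : ∀ x : ℝ, |x| > q / (1 - q) → f x = 0) :
    f (2 * q) = 0 ∧ f (-(2 * q)) = 0 ∧ f (2 - q) = 0 ∧ f (-2 + q) = 0 ∧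
      f (1 - q) = 0 ∧ f (-1 + q) = 0 := by
  have h5a : Real.sqrt 5 > 2 := by
    nlinarith [Real.sq_sqrt (show (0:ℝ) ≤ 5 by norm_num), Real.sqrt_nonneg 5]
  have h5b : Real.sqrt 5 < 3 := by
    nlinarith [Real.sq_sqrt (show (0:ℝ) ≤ 5 by norm_num), Real.sqrt_nonneg 5]
  have hq0 : 1/2 < q := by rw [hq]; linarith
  have hq1 : q < 1 := by rw [hq]; linarith
  have h5sq : Real.sqrt 5 ^ 2 = 5 := Real.sq_sqrt (by norm_num)
  have hq2 : q^2 = 1 - q := by rw [hq]; linear_combination h5sq/4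
  have hqne : q ≠ 0 := by linarith
  have hQ : q / (1 - q) = 1 + q := by
    rw [div_eq_iff (by linarith : (1:ℝ) - q ≠ 0)]; linear_combination hq2
  have zpos : ∀ x : ℝ, 1 + q < x → f x = 0 := by
    intro x hx
    exact hfv x (by rw [hQ, abs_of_pos (by linarith)]; linarith)
  have zneg : ∀ x : ℝ, x < -(1+q) → f x = 0 := by
    intro x hx
    exact hfv x (by rw [hQ, abs_of_neg (by linarith)]; linarith)
  have key : ∀ x : ℝ, 4*q*f (q*x) = f (x-1) + f (x+1) + 2*f x := by
    intro x
    rw [hfe x]; field_simp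
  -- zeros outside [-(1+q), 1+q]
  have z2 : f 2 = 0 := zpos 2 (by linarith)
  have z3 : f 3 = 0 := zpos 3 (by linarith)
  have z2q : f (2+q) = 0 := zpos (2+q) (by linarith)
  have z3q : f (3+q) = 0 := zpos (3+q) (by linarith)
  have z12 : f (1+2*q) = 0 := zpos (1+2*q) (by linarith)
  have z22 : f (2+2*q) = 0 := zpos (2+2*q) (by linarith)
  have zn2 : f (-2) = 0 := zneg (-2) (by linarith)
  have zn3 : f (-3) = 0 := zneg (-3) (by linarith)
  have zn2q : f (-(2+q)) = 0 := zneg (-(2+q)) (by linarith)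
  have zn3q : f (-(3+q)) = 0 := zneg (-(3+q)) (by linarith)
  have zn12 : f (-(1+2*q)) = 0 := zneg (-(1+2*q)) (by linarith)
  have zn22 : f (-(2+2*q)) = 0 := zneg (-(2+2*q)) (by linarith)
  -- nonzero coefficients
  have h78 : (14:ℝ) - 16*q ≠ 0 := by
    intro h; have hv : q = 7/8 := by linarith
    rw [hv] at hq2; norm_num at hq2
  have h4q : (4:ℝ)*q - 1 ≠ 0 := by linarith
  have h152 : (152:ℝ)*q - 94 ≠ 0 := by
    intro h; have hv : q = 47/76 := by linarith
    rw [hv] at hq2; norm_num at hq2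
  have h15 : (15:ℝ) - 16*q ≠ 0 := by
    intro h; have hv : q = 15/16 := by linarith
    rw [hv] at hq2; norm_num at hq2
  -- f(1+q) = 0 and f(-(1+q)) = 0
  have E3 := key (2+q)
  rw [show q*(2+q) = 1+q by linear_combination hq2,
      show (2:ℝ)+q-1 = 1+q by ring, show (2:ℝ)+q+1 = 3+q by ring] at E3
  have h1q : f (1+q) = 0 := by
    have : (4*q-1) * f (1+q) = 0 := by linear_combination E3 + z3q + 2*z2q
    exact (mul_eq_zero.mp this).resolve_left h4q
  have E4 := key (-(2+q))
  rw [show q*(-(2+q)) = -(1+q) by linear_combination -hq2,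
      show -(2+q)-1 = -(3+q) by ring, show -(2+q)+1 = -(1+q) by ring] at E4
  have hn1q : f (-(1+q)) = 0 := by
    have : (4*q-1) * f (-(1+q)) = 0 := by linear_combination E4 + zn3q + 2*zn2q
    exact (mul_eq_zero.mp this).resolve_left h4q
  -- main equations
  have E1 := key 2
  rw [show q*2 = 2*q by ring, show (2:ℝ)-1 = 1 by norm_num,
      show (2:ℝ)+1 = 3 by norm_num] at E1
  have E2 := key (-2)
  rw [show q*(-2) = -(2*q) by ring, show (-2:ℝ)-1 = -3 by norm_num,
      show (-2:ℝ)+1 = -1 by norm_num] at E2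
  have E5 := key (1+q)
  rw [show q*(1+q) = 1 by linear_combination hq2,
      show (1:ℝ)+q-1 = q by ring, show (1:ℝ)+q+1 = 2+q by ring] at E5
  have E6 := key (-(1+q))
  rw [show q*(-(1+q)) = -1 by linear_combination -hq2,
      show -(1+q)-1 = -(2+q) by ring, show -(1+q)+1 = -q by ring] at E6
  have E7 := key 1
  rw [show q*1 = q by ring, show (1:ℝ)-1 = 0 by norm_num,
      show (1:ℝ)+1 = 2 by norm_num] at E7
  have E8 := key (-1)
  rw [show q*(-1) = -q by ring, show (-1:ℝ)-1 = -2 by norm_num,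
      show (-1:ℝ)+1 = 0 by norm_num] at E8
  have E9 := key 0
  rw [show q*0 = 0 by ring, show (0:ℝ)-1 = -1 by norm_num,
      show (0:ℝ)+1 = 1 by norm_num] at E9
  -- solve linear system : f 1 = 0
  have hC : f 0 = (14 - 16*q) * f 1 := by
    linear_combination -E7 - 4*q*E5 + 16 * f 1 * hq2 - z2 - 4*q*z2q - 8*q*h1q
  have hC' : f 0 = (14 - 16*q) * f (-1) := by
    linear_combination -E8 - 4*q*E6 + 16 * f (-1) * hq2 - zn2 - 4*q*zn2q - 8*q*hn1q
  have hBB' : f 1 = f (-1) := by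
    have h : (14 - 16*q) * (f 1 - f (-1)) = 0 := by linear_combination hC' - hC
    have := (mul_eq_zero.mp h).resolve_left h78
    linarith
  have hB : f 1 = 0 := by
    have h : (152*q - 94) * f 1 = 0 := by
      linear_combination E9 - (4*q-2)*hC - hBB' + 64 * f 1 * hq2
    exact (mul_eq_zero.mp h).resolve_left h152
  have hB' : f (-1) = 0 := by rw [← hBB']; exact hB
  -- f(2q) and f(-2q)
  have hD : f (2*q) = 0 := by
    have h : (4*q) * f (2*q) = 0 := by linear_combination E1 + hB + z3 + 2*z2
    have := (mul_eq_zero.mp h).resolve_left (by linarith : (4:ℝ)*q ≠ 0)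
    exact this
  have hD' : f (-(2*q)) = 0 := by
    have h : (4*q) * f (-(2*q)) = 0 := by linear_combination E2 + hB' + zn3 + 2*zn2
    exact (mul_eq_zero.mp h).resolve_left (by linarith : (4:ℝ)*q ≠ 0)
  -- f(2-q) and f(-2+q)
  have E10 := key (1+2*q)
  rw [show q*(1+2*q) = 2-q by linear_combination 2*hq2,
      show (1:ℝ)+2*q-1 = 2*q by ring, show (1:ℝ)+2*q+1 = 2+2*q by ring] at E10
  have h2q : f (2-q) = 0 := by
    have h : (4*q) * f (2-q) = 0 := by linear_combination E10 + hD + z22 + 2*z12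
    exact (mul_eq_zero.mp h).resolve_left (by linarith : (4:ℝ)*q ≠ 0)
  have E11 := key (-(1+2*q))
  rw [show q*(-(1+2*q)) = -2+q by linear_combination -2*hq2,
      show -(1+2*q)-1 = -(2+2*q) by ring, show -(1+2*q)+1 = -(2*q) by ring] at E11
  have hn2q : f (-2+q) = 0 := by
    have h : (4*q) * f (-2+q) = 0 := by linear_combination E11 + hD' + zn22 + 2*zn12
    exact (mul_eq_zero.mp h).resolve_left (by linarith : (4:ℝ)*q ≠ 0)
  -- f q = 0 and f (-q) = 0
  have hA : f q = 0 := by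
    linear_combination -E5 + 4*q*hB - z2q - 2*h1q
  have hA' : f (-q) = 0 := by
    linear_combination -E6 + 4*q*hB' - zn2q - 2*hn1q
  -- f(1-q) and f(-1+q)
  have E12 := key q
  rw [show q*q = 1-q by linear_combination hq2,
      show q-1 = -(1-q) by ring, show q+1 = 1+q by ring] at E12
  have E13 := key (-q)
  rw [show q*(-q) = -(1-q) by linear_combination -hq2,
      show -q-1 = -(1+q) by ring, show -q+1 = 1-q by ring] at E13
  have hE : f (1-q) = 0 := by
    have h : (15 - 16*q) * f (1-q) = 0 := by
      linear_combination 4*q*E12 + E13 - 16 * f (1-q) * hq2 + 4*q*h1q + 8*q*hA + hn1q + 2*hA'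
    exact (mul_eq_zero.mp h).resolve_left h15
  have hE' : f (-(1-q)) = 0 := by
    have h : (4*q) * f (-(1-q)) = 0 := by linear_combination E13 + hn1q + hE + 2*hA'
    exact (mul_eq_zero.mp h).resolve_left (by linarith : (4:ℝ)*q ≠ 0)
  refine ⟨hD, hD', h2q, hn2q, by rw [show (1:ℝ)-q = 1-q by ring]; exact hE, ?_⟩
  rw [show (-1:ℝ)+q = -(1-q) by ring]; exact hE'
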